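/- arXiv:2211.01057 — 4 statements merged into one kernel-verified Lean document; each statement's English description precedes it below -/
import Mathlib

section
/- For every n ≥ 2, the graph NO⁺(2n,2) is a strongly regular graph with parameters v = 2^(2n-1) − 2^(n-1), k = 2^(2n-2) − 1, λ = 2^(2n-3) − 2, μ = 2^(2n-3) + 2^(n-2). -/
open scoped Classical

/-- The hyperbolic quadratic form `Q(x) = x₁x₂ + x₃x₄ + ⋯ + x_{2n-1}x_{2n}`
on `GF(2)^(2n)`. -/
def hypQ (n : ℕ) (x : Fin (2 * n) → ZMod 2) : ZMod 2 :=
  ∑ i : Fin n, x ⟨2 * i.val, by omega⟩ * x ⟨2 * i.val + 1, by omega⟩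

/-- The graph `NO⁺(2n,2)`: vertices are the vectors `v ∈ GF(2)^(2n)` with `Q(v) = 1`,
and two distinct vertices `u, v` are adjacent iff `Q(u + v) = 0`. -/
noncomputable def NOplus (n : ℕ) :
    SimpleGraph {v : Fin (2 * n) → ZMod 2 // hypQ n v = 1} where
  Adj u v := u ≠ v ∧ hypQ n (u.1 + v.1) = 0
  symm := ⟨fun u v h => ⟨h.1.symm, by rw [add_comm]; exact h.2⟩⟩
  loopless := ⟨fun u h => h.1 rfl⟩


open Finset

def eps (a : ZMod 2) : ℤ := if a = 0 then 1 else -1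

lemma eps_add : ∀ a b : ZMod 2, eps (a + b) = eps a * eps b := by decide

lemma eps_sum {ι : Type*} (s : Finset ι) (f : ι → ZMod 2) :
    eps (∑ i ∈ s, f i) = ∏ i ∈ s, eps (f i) := by
  induction s using Finset.cons_induction with
  | empty => simp [eps]
  | cons a s ha ih => rw [Finset.sum_cons, Finset.prod_cons, eps_add, ih]

def polB (n : ℕ) (u x : Fin (2 * n) → ZMod 2) : ZMod 2 :=
  ∑ i : Fin n, (u ⟨2 * i.val, by omega⟩ * x ⟨2 * i.val + 1, by omega⟩
    + u ⟨2 * i.val + 1, by omega⟩ * x ⟨2 * i.val, by omega⟩)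

lemma polar (n : ℕ) (u x : Fin (2 * n) → ZMod 2) :
    hypQ n (u + x) = hypQ n u + hypQ n x + polB n u x := by
  unfold hypQ polB
  rw [← Finset.sum_add_distrib, ← Finset.sum_add_distrib]
  refine Finset.sum_congr rfl fun i _ => ?_
  simp only [Pi.add_apply]
  ring

lemma polB_symm (n : ℕ) (u x : Fin (2 * n) → ZMod 2) : polB n u x = polB n x u := by
  unfold polB; refine Finset.sum_congr rfl fun i _ => ?_; ring

lemma polB_add_left (n : ℕ) (u v x : Fin (2 * n) → ZMod 2) :
    polB n (u + v) x = polB n u x + polB n v x := by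
  unfold polB
  rw [← Finset.sum_add_distrib]
  refine Finset.sum_congr rfl fun i _ => ?_
  simp only [Pi.add_apply]; ring

lemma polB_add_right (n : ℕ) (u x y : Fin (2 * n) → ZMod 2) :
    polB n u (x + y) = polB n u x + polB n u y := by
  rw [polB_symm, polB_add_left, polB_symm n x u, polB_symm n y u]

lemma polB_self (n : ℕ) (u : Fin (2 * n) → ZMod 2) : polB n u u = 0 := by
  unfold polB
  rw [Finset.sum_eq_zero]
  intro i _
  have : ∀ a b : ZMod 2, a * b + b * a = 0 := by decide
  exact this _ _

def pairEquiv (n : ℕ) : (Fin n → ZMod 2 × ZMod 2) ≃ (Fin (2 * n) → ZMod 2) where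
  toFun y j :=
    if h : j.val % 2 = 0 then (y ⟨j.val / 2, by omega⟩).1 else (y ⟨j.val / 2, by omega⟩).2
  invFun x i := (x ⟨2 * i.val, by omega⟩, x ⟨2 * i.val + 1, by omega⟩)
  left_inv y := by
    funext i
    have h1 : (2 * i.val) % 2 = 0 := by omega
    have h2 : ¬((2 * i.val + 1) % 2 = 0) := by omega
    dsimp only
    rw [dif_pos h1, dif_neg h2]
    have e1 : (⟨2 * i.val / 2, by omega⟩ : Fin n) = i := by ext; simp only [Fin.val_mk]; omega
    have e2 : (⟨(2 * i.val + 1) / 2, by omega⟩ : Fin n) = i := by ext; simp only [Fin.val_mk]; omega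
    rw [e1, e2]
  right_inv x := by
    funext j
    by_cases h : j.val % 2 = 0
    · dsimp only
      rw [dif_pos h]
      have e1 : (⟨2 * ((⟨j.val / 2, by omega⟩ : Fin n)).val, by omega⟩ : Fin (2 * n)) = j := by
        ext; simp; omega
      rw [e1]
    · dsimp only
      rw [dif_neg h]
      have e1 : (⟨2 * ((⟨j.val / 2, by omega⟩ : Fin n)).val + 1, by omega⟩ : Fin (2 * n)) = j := by
        ext; simp; omega
      rw [e1]

lemma hypQ_pairEquiv (n : ℕ) (y : Fin n → ZMod 2 × ZMod 2) :
    hypQ n (pairEquiv n y) = ∑ i : Fin n, (y i).1 * (y i).2 := by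
  unfold hypQ pairEquiv
  refine Finset.sum_congr rfl fun i _ => ?_
  have h1 : (2 * i.val) % 2 = 0 := by omega
  have h2 : (2 * i.val + 1) % 2 = 1 := by omega
  have h3 : (2 * i.val) / 2 = i.val := by omega
  have h4 : (2 * i.val + 1) / 2 = i.val := by omega
  simp only [Equiv.coe_fn_mk, h1, h2, h3, h4, reduceDIte]
  norm_num

lemma S1 (n : ℕ) : ∑ x : Fin (2 * n) → ZMod 2, eps (hypQ n x) = 2 ^ n := by
  rw [← Equiv.sum_comp (pairEquiv n) (fun x => eps (hypQ n x))]
  simp only [hypQ_pairEquiv]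
  have : ∀ y : Fin n → ZMod 2 × ZMod 2,
      eps (∑ i : Fin n, (y i).1 * (y i).2) = ∏ i : Fin n, eps ((y i).1 * (y i).2) :=
    fun y => eps_sum _ _
  simp only [this]
  rw [← Fintype.piFinset_univ, ← Finset.prod_univ_sum (fun _ => Finset.univ)
    (fun (_ : Fin n) (p : ZMod 2 × ZMod 2) => eps (p.1 * p.2))]
  have : ∑ p : ZMod 2 × ZMod 2, eps (p.1 * p.2) = 2 := by decide
  rw [Finset.prod_congr rfl fun _ _ => this, Finset.prod_const]
  simp

lemma exists_polB_eq_one (n : ℕ) (u : Fin (2 * n) → ZMod 2) (hu : u ≠ 0) :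
    ∃ x, polB n u x = 1 := by
  have : ∃ j, u j ≠ 0 := by
    by_contra h
    push_neg at h
    exact hu (funext fun j => h j)
  obtain ⟨j, hj⟩ := this
  have hj1 : u j = 1 := by
    have : ∀ a : ZMod 2, a ≠ 0 → a = 1 := by decide
    exact this _ hj
  set i0 : Fin n := ⟨j.val / 2, by omega⟩ with hi0def
  have hi : i0.val = j.val / 2 := rfl
  by_cases hpar : j.val % 2 = 0
  · refine ⟨fun m => if m.val = j.val + 1 then 1 else 0, ?_⟩
    unfold polB
    rw [Finset.sum_eq_single i0]
    · have e1 : (⟨2 * i0.val, by omega⟩ : Fin (2 * n)) = j := Fin.ext (by simp only [Fin.val_mk]; omega)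
      dsimp only
      rw [if_pos (by omega : 2 * i0.val + 1 = j.val + 1),
        if_neg (by omega : ¬(2 * i0.val = j.val + 1)), e1, hj1]
      ring
    · intro b _ hb
      have hbv : b.val ≠ j.val / 2 := fun h => hb (Fin.ext (h.trans hi.symm))
      dsimp only
      rw [if_neg (by omega : ¬(2 * b.val + 1 = j.val + 1)),
        if_neg (by omega : ¬(2 * b.val = j.val + 1))]
      ring
    · intro h; exact absurd (Finset.mem_univ i0) h
  · refine ⟨fun m => if m.val = j.val - 1 then 1 else 0, ?_⟩
    unfold polB
    rw [Finset.sum_eq_single i0]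
    · have e1 : (⟨2 * i0.val + 1, by omega⟩ : Fin (2 * n)) = j := Fin.ext (by simp only [Fin.val_mk]; omega)
      dsimp only
      rw [if_neg (by omega : ¬(2 * i0.val + 1 = j.val - 1)),
        if_pos (by omega : 2 * i0.val = j.val - 1), e1, hj1]
      ring
    · intro b _ hb
      have hbv : b.val ≠ j.val / 2 := fun h => hb (Fin.ext (h.trans hi.symm))
      dsimp only
      rw [if_neg (by omega : ¬(2 * b.val + 1 = j.val - 1)),
        if_neg (by omega : ¬(2 * b.val = j.val - 1))]
      ring
    · intro h; exact absurd (Finset.mem_univ i0) h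

lemma S2 (n : ℕ) (u : Fin (2 * n) → ZMod 2) (hu : u ≠ 0) :
    ∑ x : Fin (2 * n) → ZMod 2, eps (polB n u x) = 0 := by
  obtain ⟨x0, hx0⟩ := exists_polB_eq_one n u hu
  have h := Equiv.sum_comp (Equiv.addLeft x0) (fun x => eps (polB n u x))
  simp only [Equiv.coe_addLeft] at h
  have h2 : ∀ x, eps (polB n u (x0 + x)) = - eps (polB n u x) := by
    intro x
    rw [polB_add_right, eps_add, hx0]
    have : eps 1 = -1 := rfl
    rw [this]; ring
  rw [Finset.sum_congr rfl fun x _ => h2 x] at h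
  rw [Finset.sum_neg_distrib] at h
  linarith

lemma key_rearrange (n : ℕ) (u x : Fin (2 * n) → ZMod 2) :
    hypQ n x + polB n u x = hypQ n (u + x) + hypQ n u := by
  rw [polar]
  have : ∀ a b c : ZMod 2, b + c = a + b + c + a := by decide
  exact this _ _ _

lemma S3 (n : ℕ) (u : Fin (2 * n) → ZMod 2) :
    ∑ x : Fin (2 * n) → ZMod 2, eps (hypQ n x + polB n u x) = eps (hypQ n u) * 2 ^ n := by
  have h1 : ∀ x, eps (hypQ n x + polB n u x) = eps (hypQ n u) * eps (hypQ n (u + x)) := by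
    intro x
    rw [key_rearrange, eps_add]; ring
  rw [Finset.sum_congr rfl fun x _ => h1 x, ← Finset.mul_sum]
  have h := Equiv.sum_comp (Equiv.addLeft u) (fun x => eps (hypQ n x))
  simp only [Equiv.coe_addLeft] at h
  rw [h, S1]

lemma hypQ_zero (n : ℕ) : hypQ n (0 : Fin (2 * n) → ZMod 2) = 0 := by
  unfold hypQ; simp

lemma add_self_fun {n : ℕ} (u : Fin (2 * n) → ZMod 2) : u + u = 0 := by
  funext j
  have : ∀ a : ZMod 2, a + a = 0 := by decide
  exact this _

lemma ne_zero_of_ne {n : ℕ} {u v : Fin (2 * n) → ZMod 2} (h : u ≠ v) : u + v ≠ 0 := by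
  intro h0
  apply h
  have : u = u + (v + v) := by rw [add_self_fun, add_zero]
  rw [this, ← add_assoc, h0, zero_add]

lemma sum_ite_card {α : Type*} [Fintype α] (p : α → Prop) [DecidablePred p] (c : ℤ) :
    ∑ x : α, (if p x then c else 0) = (Finset.univ.filter p).card * c := by
  rw [Finset.sum_ite, Finset.sum_const, Finset.sum_const_zero, add_zero, nsmul_eq_mul]

lemma card_amb (n : ℕ) : Fintype.card (Fin (2 * n) → ZMod 2) = 2 ^ (2 * n) := by
  simp [ZMod.card]

lemma sum_one (n : ℕ) : ∑ _x : Fin (2 * n) → ZMod 2, (1 : ℤ) = 2 ^ (2 * n) := by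
  rw [Finset.sum_const, Finset.card_univ, card_amb, nsmul_eq_mul, mul_one]
  push_cast
  ring

lemma countV (n : ℕ) (hn : 1 ≤ n) :
    (Finset.univ.filter fun x : Fin (2 * n) → ZMod 2 => hypQ n x = 1).card
      = 2 ^ (2 * n - 1) - 2 ^ (n - 1) := by
  have key : ∀ a : ZMod 2, (if a = 1 then (4 : ℤ) else 0) = 2 * (1 - eps a) := by decide
  have h2 : ((Finset.univ.filter fun x : Fin (2 * n) → ZMod 2 => hypQ n x = 1).card : ℤ) * 4
      = ∑ x : Fin (2 * n) → ZMod 2, (2 * (1 - eps (hypQ n x))) := by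
    rw [← sum_ite_card]
    exact Finset.sum_congr rfl fun x _ => (key _)
  have hsum2 : ∑ _x : Fin (2 * n) → ZMod 2, (2 : ℤ) = 2 * 2 ^ (2 * n) := by
    rw [Finset.sum_const, Finset.card_univ, card_amb, nsmul_eq_mul]; push_cast; ring
  rw [Finset.sum_congr rfl fun (x : Fin (2*n) → ZMod 2) _ =>
    (by ring : (2 : ℤ) * (1 - eps (hypQ n x)) = 2 - 2 * eps (hypQ n x)),
    Finset.sum_sub_distrib, ← Finset.mul_sum, hsum2, S1] at h2
  have hle : (2 : ℕ) ^ (n - 1) ≤ 2 ^ (2 * n - 1) := Nat.pow_le_pow_right (by norm_num) (by omega)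
  have e1 : (2 : ℤ) ^ (2 * n) = 2 * 2 ^ (2 * n - 1) := by
    have h := pow_add (2 : ℤ) 1 (2 * n - 1)
    rw [show 1 + (2 * n - 1) = 2 * n by omega] at h
    rw [h]; ring
  have e2 : (2 : ℤ) ^ n = 2 * 2 ^ (n - 1) := by
    have h := pow_add (2 : ℤ) 1 (n - 1)
    rw [show 1 + (n - 1) = n by omega] at h
    rw [h]; ring
  have : ((Finset.univ.filter fun x : Fin (2 * n) → ZMod 2 => hypQ n x = 1).card : ℤ)
      = ((2 ^ (2 * n - 1) - 2 ^ (n - 1) : ℕ) : ℤ) := by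
    push_cast [Nat.cast_sub hle]
    linarith
  exact_mod_cast this

lemma countDeg (n : ℕ) (hn : 1 ≤ n) (u : Fin (2 * n) → ZMod 2) (hu : hypQ n u = 1) :
    (Finset.univ.filter fun x : Fin (2 * n) → ZMod 2 =>
      hypQ n x = 1 ∧ polB n u x = 0).card = 2 ^ (2 * n - 2) := by
  have hu0 : u ≠ 0 := by intro h; rw [h, hypQ_zero] at hu; exact one_ne_zero hu.symm
  have key : ∀ a b : ZMod 2, (if a = 1 ∧ b = 0 then (4 : ℤ) else 0)
      = 1 + eps b - eps a - eps a * eps b := by decide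
  have h2 : ((Finset.univ.filter fun x : Fin (2 * n) → ZMod 2 =>
      hypQ n x = 1 ∧ polB n u x = 0).card : ℤ) * 4
      = ∑ x : Fin (2 * n) → ZMod 2,
        (1 + eps (polB n u x) - eps (hypQ n x) - eps (hypQ n x + polB n u x)) := by
    rw [← sum_ite_card]
    refine Finset.sum_congr rfl fun x _ => ?_
    rw [key, eps_add]
  rw [Finset.sum_sub_distrib, Finset.sum_sub_distrib, Finset.sum_add_distrib,
    sum_one, S1, S2 n u hu0, S3, hu] at h2
  have heps : eps 1 = -1 := rfl
  rw [heps] at h2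
  have e1 : (2 : ℤ) ^ (2 * n) = 4 * 2 ^ (2 * n - 2) := by
    have h := pow_add (2 : ℤ) 2 (2 * n - 2)
    rw [show 2 + (2 * n - 2) = 2 * n by omega] at h
    rw [h]; ring
  have : ((Finset.univ.filter fun x : Fin (2 * n) → ZMod 2 =>
      hypQ n x = 1 ∧ polB n u x = 0).card : ℤ) = ((2 ^ (2 * n - 2) : ℕ) : ℤ) := by
    push_cast
    linarith
  exact_mod_cast this

lemma countPair (n : ℕ) (hn : 2 ≤ n) (u v : Fin (2 * n) → ZMod 2)
    (hu : hypQ n u = 1) (hv : hypQ n v = 1) (huv : u ≠ v) :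
    ((Finset.univ.filter fun x : Fin (2 * n) → ZMod 2 =>
      hypQ n x = 1 ∧ polB n u x = 0 ∧ polB n v x = 0).card : ℤ)
      = 2 ^ (2 * n - 3) + (1 - eps (hypQ n (u + v))) / 2 * 2 ^ (n - 2) := by
  have hu0 : u ≠ 0 := by intro h; rw [h, hypQ_zero] at hu; exact one_ne_zero hu.symm
  have hv0 : v ≠ 0 := by intro h; rw [h, hypQ_zero] at hv; exact one_ne_zero hv.symm
  have huv0 : u + v ≠ 0 := ne_zero_of_ne huv
  have key : ∀ a b c : ZMod 2, (if a = 1 ∧ b = 0 ∧ c = 0 then (8 : ℤ) else 0)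
      = 1 + eps b + eps c + eps b * eps c
        - eps a - eps a * eps b - eps a * eps c - eps a * (eps b * eps c) := by decide
  have h2 : ((Finset.univ.filter fun x : Fin (2 * n) → ZMod 2 =>
      hypQ n x = 1 ∧ polB n u x = 0 ∧ polB n v x = 0).card : ℤ) * 8
      = ∑ x : Fin (2 * n) → ZMod 2,
        (1 + eps (polB n u x) + eps (polB n v x) + eps (polB n (u + v) x)
          - eps (hypQ n x) - eps (hypQ n x + polB n u x) - eps (hypQ n x + polB n v x)
          - eps (hypQ n x + polB n (u + v) x)) := by
    rw [← sum_ite_card]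
    refine Finset.sum_congr rfl fun x _ => ?_
    rw [key (hypQ n x) (polB n u x) (polB n v x)]
    rw [polB_add_left, eps_add, eps_add (hypQ n x), eps_add (hypQ n x),
      eps_add (hypQ n x), eps_add (polB n u x)]
  rw [Finset.sum_sub_distrib, Finset.sum_sub_distrib, Finset.sum_sub_distrib,
    Finset.sum_sub_distrib, Finset.sum_add_distrib, Finset.sum_add_distrib,
    Finset.sum_add_distrib, sum_one, S1, S2 n u hu0, S2 n v hv0, S2 n (u + v) huv0, S3, S3, S3, hu, hv] at h2
  have heps : eps 1 = -1 := rfl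
  rw [heps] at h2
  have e1 : (2 : ℤ) ^ (2 * n) = 8 * 2 ^ (2 * n - 3) := by
    have h := pow_add (2 : ℤ) 3 (2 * n - 3)
    rw [show 3 + (2 * n - 3) = 2 * n by omega] at h
    rw [h]; ring
  have e2 : (2 : ℤ) ^ n = 4 * 2 ^ (n - 2) := by
    have h := pow_add (2 : ℤ) 2 (n - 2)
    rw [show 2 + (n - 2) = n by omega] at h
    rw [h]; ring
  have hcases : hypQ n (u + v) = 0 ∨ hypQ n (u + v) = 1 := by
    have : ∀ a : ZMod 2, a = 0 ∨ a = 1 := by decide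
    exact this _
  rcases hcases with h | h <;> rw [h] at h2 ⊢ <;>
    simp only [show eps 0 = 1 from rfl, heps] at h2 ⊢ <;> norm_num at h2 ⊢ <;> linarith

lemma polar11 (n : ℕ) {u w : Fin (2 * n) → ZMod 2} (hu : hypQ n u = 1) (hw : hypQ n w = 1) :
    hypQ n (u + w) = polB n u w := by
  rw [polar, hu, hw]
  have : ∀ b : ZMod 2, 1 + 1 + b = b := by decide
  exact this _

lemma neighbor_card (n : ℕ) (hn : 1 ≤ n) (u : {v : Fin (2 * n) → ZMod 2 // hypQ n v = 1}) :
    (NOplus n).degree u = 2 ^ (2 * n - 2) - 1 := by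
  classical
  rw [← SimpleGraph.card_neighborSet_eq_degree]
  have e : ((NOplus n).neighborSet u) ≃
      {x : Fin (2 * n) → ZMod 2 // hypQ n x = 1 ∧ (polB n u.1 x = 0 ∧ x ≠ u.1)} := by
    refine Equiv.trans (Equiv.subtypeEquivRight (q := fun w => polB n u.1 w.1 = 0 ∧ w.1 ≠ u.1) ?_)
      (Equiv.subtypeSubtypeEquivSubtypeInter (fun x => hypQ n x = 1)
        (fun x => polB n u.1 x = 0 ∧ x ≠ u.1))
    intro w
    constructor
    · rintro ⟨hne, hq⟩
      refine ⟨by rwa [polar11 n u.2 w.2] at hq, ?_⟩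
      intro h
      exact hne (Subtype.ext h.symm)
    · rintro ⟨hb, hne⟩
      exact ⟨fun h => hne (by rw [h]), by rwa [polar11 n u.2 w.2]⟩
  rw [Fintype.card_congr e, Fintype.card_subtype]
  have hfe : (Finset.univ.filter fun x : Fin (2 * n) → ZMod 2 =>
        hypQ n x = 1 ∧ (polB n u.1 x = 0 ∧ x ≠ u.1))
      = (Finset.univ.filter fun x : Fin (2 * n) → ZMod 2 =>
        hypQ n x = 1 ∧ polB n u.1 x = 0).erase u.1 := by
    ext x
    simp only [Finset.mem_filter, Finset.mem_erase, Finset.mem_univ, true_and]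
    tauto
  rw [hfe, Finset.card_erase_of_mem, countDeg n hn u.1 u.2]
  simp only [Finset.mem_filter, Finset.mem_univ, true_and]
  exact ⟨u.2, polB_self n u.1⟩

lemma common_card (n : ℕ) (hn : 2 ≤ n) (u v : {v : Fin (2 * n) → ZMod 2 // hypQ n v = 1})
    (huv : u ≠ v) :
    Fintype.card ((NOplus n).commonNeighbors u v)
      = (Finset.univ.filter fun x : Fin (2 * n) → ZMod 2 =>
          hypQ n x = 1 ∧ (polB n u.1 x = 0 ∧ polB n v.1 x = 0 ∧ x ≠ u.1 ∧ x ≠ v.1)).card := by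
  classical
  have e : ((NOplus n).commonNeighbors u v) ≃
      {x : Fin (2 * n) → ZMod 2 // hypQ n x = 1 ∧
        (polB n u.1 x = 0 ∧ polB n v.1 x = 0 ∧ x ≠ u.1 ∧ x ≠ v.1)} := by
    refine Equiv.trans (Equiv.subtypeEquivRight (q := fun w =>
      polB n u.1 w.1 = 0 ∧ polB n v.1 w.1 = 0 ∧ w.1 ≠ u.1 ∧ w.1 ≠ v.1) ?_)
      (Equiv.subtypeSubtypeEquivSubtypeInter (fun x => hypQ n x = 1)
        (fun x => polB n u.1 x = 0 ∧ polB n v.1 x = 0 ∧ x ≠ u.1 ∧ x ≠ v.1))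
    intro w
    rw [SimpleGraph.mem_commonNeighbors]
    constructor
    · rintro ⟨⟨hne1, hq1⟩, ⟨hne2, hq2⟩⟩
      exact ⟨by rwa [polar11 n u.2 w.2] at hq1, by rwa [polar11 n v.2 w.2] at hq2,
        fun h => hne1 (Subtype.ext h.symm), fun h => hne2 (Subtype.ext h.symm)⟩
    · rintro ⟨hb1, hb2, hne1, hne2⟩
      exact ⟨⟨fun h => hne1 (by rw [h]), by rwa [polar11 n u.2 w.2]⟩,
        ⟨fun h => hne2 (by rw [h]), by rwa [polar11 n v.2 w.2]⟩⟩
  rw [Fintype.card_congr e, Fintype.card_subtype]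

lemma common_card_adj (n : ℕ) (hn : 2 ≤ n) (u v : {v : Fin (2 * n) → ZMod 2 // hypQ n v = 1})
    (hadj : (NOplus n).Adj u v) :
    Fintype.card ((NOplus n).commonNeighbors u v) = 2 ^ (2 * n - 3) - 2 := by
  classical
  obtain ⟨huv, hq0⟩ := hadj
  have hvne : u.1 ≠ v.1 := fun h => huv (Subtype.ext h)
  rw [common_card n hn u v huv]
  set M := Finset.univ.filter fun x : Fin (2 * n) → ZMod 2 =>
    hypQ n x = 1 ∧ polB n u.1 x = 0 ∧ polB n v.1 x = 0 with hM
  have hMcard : (M.card : ℤ) = 2 ^ (2 * n - 3) := by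
    rw [hM, countPair n hn u.1 v.1 u.2 v.2 (fun h => huv (Subtype.ext h)), hq0]
    norm_num [eps]
  have hMcardN : M.card = 2 ^ (2 * n - 3) := by exact_mod_cast hMcard
  have huM : u.1 ∈ M := by
    rw [hM]
    simp only [Finset.mem_filter, Finset.mem_univ, true_and]
    refine ⟨u.2, polB_self n u.1, ?_⟩
    rw [polB_symm, ← polar11 n u.2 v.2]
    exact hq0
  have hvM : v.1 ∈ M := by
    rw [hM]
    simp only [Finset.mem_filter, Finset.mem_univ, true_and]
    refine ⟨v.2, ?_, polB_self n v.1⟩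
    rw [← polar11 n u.2 v.2]
    exact hq0
  have hfe : (Finset.univ.filter fun x : Fin (2 * n) → ZMod 2 =>
        hypQ n x = 1 ∧ (polB n u.1 x = 0 ∧ polB n v.1 x = 0 ∧ x ≠ u.1 ∧ x ≠ v.1))
      = (M.erase v.1).erase u.1 := by
    ext x
    simp only [hM, Finset.mem_erase, Finset.mem_filter, Finset.mem_univ, true_and]
    tauto
  rw [hfe, Finset.card_erase_of_mem, Finset.card_erase_of_mem hvM, hMcardN]
  · have : 2 ≤ (2 : ℕ) ^ (2 * n - 3) := by
      calc (2:ℕ) = 2 ^ 1 := by norm_num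
      _ ≤ 2 ^ (2 * n - 3) := Nat.pow_le_pow_right (by norm_num) (by omega)
    omega
  · exact Finset.mem_erase.mpr ⟨hvne, huM⟩

lemma common_card_nonadj (n : ℕ) (hn : 2 ≤ n) (u v : {v : Fin (2 * n) → ZMod 2 // hypQ n v = 1})
    (huv : u ≠ v) (hnadj : ¬(NOplus n).Adj u v) :
    Fintype.card ((NOplus n).commonNeighbors u v) = 2 ^ (2 * n - 3) + 2 ^ (n - 2) := by
  classical
  have hq1 : hypQ n (u.1 + v.1) = 1 := by
    have hd : ∀ a : ZMod 2, a = 0 ∨ a = 1 := by decide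
    rcases hd (hypQ n (u.1 + v.1)) with h | h
    · exact absurd ⟨huv, h⟩ hnadj
    · exact h
  rw [common_card n hn u v huv]
  set M := Finset.univ.filter fun x : Fin (2 * n) → ZMod 2 =>
    hypQ n x = 1 ∧ polB n u.1 x = 0 ∧ polB n v.1 x = 0 with hM
  have hMcard : (M.card : ℤ) = 2 ^ (2 * n - 3) + 2 ^ (n - 2) := by
    rw [hM, countPair n hn u.1 v.1 u.2 v.2 (fun h => huv (Subtype.ext h)), hq1]
    norm_num [eps]
  have hBvu : polB n v.1 u.1 = 1 := by
    rw [polB_symm, ← polar11 n u.2 v.2]; exact hq1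
  have hBuv : polB n u.1 v.1 = 1 := by
    rw [← polar11 n u.2 v.2]; exact hq1
  have hfe : (Finset.univ.filter fun x : Fin (2 * n) → ZMod 2 =>
        hypQ n x = 1 ∧ (polB n u.1 x = 0 ∧ polB n v.1 x = 0 ∧ x ≠ u.1 ∧ x ≠ v.1)) = M := by
    ext x
    simp only [hM, Finset.mem_filter, Finset.mem_univ, true_and]
    constructor
    · tauto
    · rintro ⟨h1, h2, h3⟩
      refine ⟨h1, h2, h3, ?_, ?_⟩
      · intro h; rw [h, hBvu] at h3; exact one_ne_zero h3
      · intro h; rw [h, hBuv] at h2; exact one_ne_zero h2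
  rw [hfe]
  exact_mod_cast hMcard


/-- For `n ≥ 2`, the graph `NO⁺(2n,2)` is strongly regular with parameters
`v = 2^(2n-1) − 2^(n-1)`, `k = 2^(2n-2) − 1`, `λ = 2^(2n-3) − 2`,
`μ = 2^(2n-3) + 2^(n-2)`. -/
theorem NOplus_isSRG (n : ℕ) (hn : 2 ≤ n) :
    (NOplus n).IsSRGWith (2 ^ (2 * n - 1) - 2 ^ (n - 1)) (2 ^ (2 * n - 2) - 1)
      (2 ^ (2 * n - 3) - 2) (2 ^ (2 * n - 3) + 2 ^ (n - 2)) := by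
  classical
  constructor
  · rw [Fintype.card_subtype]
    exact countV n (by omega)
  · exact fun u => neighbor_card n (by omega) u
  · exact fun u v hadj => common_card_adj n hn u v hadj
  · exact fun u v huv hnadj => common_card_nonadj n hn u v huv hnadj
end

section
/- The graphs NO⁺(6,2) and NM are isomorphic, i.e., there exists a graph isomorphism between the graph NO⁺(6,2) on the 28 non-isotropic points of a hyperbolic quadric in PG(5,2) and the graph NM on the 28 nonsingular symmetric 3×3 matrices over GF(2). -/
open scoped Classical

/-- The hyperbolic quadratic form `Q(x) = x₁x₂ + x₃x₄ + x₅x₆` on `GF(2)⁶`. -/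
def hypQ6 (x : Fin 6 → ZMod 2) : ZMod 2 :=
  x 0 * x 1 + x 2 * x 3 + x 4 * x 5

/-- The graph `NO⁺(6,2)`: vertices are the vectors `v ∈ GF(2)⁶` with `Q(v) = 1`,
and two distinct vertices `u, v` are adjacent iff `Q(u + v) = 0`. -/
noncomputable def NO6 : SimpleGraph {v : Fin 6 → ZMod 2 // hypQ6 v = 1} where
  Adj u v := u ≠ v ∧ hypQ6 (u.1 + v.1) = 0
  symm := ⟨fun u v h => ⟨h.1.symm, by rw [add_comm]; exact h.2⟩⟩
  loopless := ⟨fun u h => h.1 rfl⟩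

/-- The graph `NM`: vertices are the symmetric `3 × 3` matrices over `GF(2)` with nonzero
determinant; two distinct vertices are adjacent iff their sum is singular. -/
noncomputable def NM :
    SimpleGraph {M : Matrix (Fin 3) (Fin 3) (ZMod 2) // M.IsSymm ∧ M.det ≠ 0} where
  Adj A B := A ≠ B ∧ (A.1 + B.1).det = 0
  symm := ⟨fun A B h => ⟨h.1.symm, by rw [add_comm]; exact h.2⟩⟩
  loopless := ⟨fun A h => h.1 rfl⟩

def nmBit (n i : ℕ) : ZMod 2 := if n.testBit i then 1 else 0

def nmMatOf (n : ℕ) : Matrix (Fin 3) (Fin 3) (ZMod 2) :=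
  !![nmBit n 0, nmBit n 3, nmBit n 4;
     nmBit n 3, nmBit n 1, nmBit n 5;
     nmBit n 4, nmBit n 5, nmBit n 2]

def nmCode (x : Fin 6 → ZMod 2) : ℕ :=
  (x 0).val + 2*(x 1).val + 4*(x 2).val + 8*(x 3).val + 16*(x 4).val + 32*(x 5).val

def nmTbl : List ℕ :=
  [0, 1, 20, 18, 24, 45, 6, 7, 48, 25, 34, 50, 29, 55, 13, 23, 16, 9, 2, 58, 4, 3,
   30, 47, 40, 21, 42, 26, 53, 31, 37, 63, 32, 17, 52, 22, 56, 61, 38, 19, 8, 5, 10,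
   54, 41, 35, 57, 15, 12, 46, 28, 11, 33, 43, 49, 39, 44, 14, 60, 59, 36, 51, 62, 27]

def nmF (x : Fin 6 → ZMod 2) : Matrix (Fin 3) (Fin 3) (ZMod 2) :=
  nmMatOf (nmTbl.getD (nmCode x) 0)

lemma nmMatOf_isSymm (n : ℕ) : (nmMatOf n).IsSymm := by
  unfold Matrix.IsSymm
  ext i j
  fin_cases i <;> fin_cases j <;> simp [nmMatOf]

lemma nmF_det (v : {v : Fin 6 → ZMod 2 // hypQ6 v = 1}) : (nmF v.1).det ≠ 0 := by
  revert v; decide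

noncomputable def nmFs (v : {v : Fin 6 → ZMod 2 // hypQ6 v = 1}) :
    {M : Matrix (Fin 3) (Fin 3) (ZMod 2) // M.IsSymm ∧ M.det ≠ 0} :=
  ⟨nmF v.1, nmMatOf_isSymm _, nmF_det v⟩

lemma nmFs_bij : Function.Bijective nmFs := by
  constructor
  · intro a b h
    have : nmF a.1 = nmF b.1 := congrArg Subtype.val h
    revert this
    revert a b
    decide
  · intro b
    have h : ∃ a : {v : Fin 6 → ZMod 2 // hypQ6 v = 1}, nmF a.1 = b.1 := by
      revert b; decide
    obtain ⟨a, ha⟩ := h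
    exact ⟨a, Subtype.ext ha⟩

lemma nmFs_adj (u v : {v : Fin 6 → ZMod 2 // hypQ6 v = 1}) :
    NM.Adj (nmFs u) (nmFs v) ↔ NO6.Adj u v := by
  show (nmFs u ≠ nmFs v ∧ ((nmFs u).1 + (nmFs v).1).det = 0) ↔ (u ≠ v ∧ hypQ6 (u.1 + v.1) = 0)
  constructor
  · rintro ⟨h1, h2⟩
    refine ⟨fun h => h1 (by rw [h]), ?_⟩
    revert h2; revert u v; decide
  · rintro ⟨h1, h2⟩
    refine ⟨fun h => h1 (nmFs_bij.1 h), ?_⟩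
    revert h2; revert u v; decide

/-- The graphs `NO⁺(6,2)` and `NM` are isomorphic. -/
theorem NO6_iso_NM : Nonempty (NO6 ≃g NM) := by
  refine ⟨⟨Equiv.ofBijective nmFs nmFs_bij, ?_⟩⟩
  intro u v
  exact nmFs_adj u v
end

section
/- The graph NM-hat, whose vertices are the 28 nonsingular symmetric 3×3 matrices over GF(2) and in which two distinct vertices A and B are adjacent if and only if A+B has all diagonal entries zero, is isomorphic to the disjoint union of 7 copies of the complete graph K₄ (i.e., to the graph on Fin 7 × Fin 4 in which (i,a) and (j,b) are adjacent iff i = j and a ≠ b). -/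
open scoped Classical

/-- The graph `NM-hat`: vertices are the symmetric `3 × 3` matrices over `GF(2)` with
nonzero determinant; two distinct vertices `A, B` are adjacent iff `A + B` has zero
diagonal (i.e. the third point of the line `AB` lies in the nuclei plane `N`). -/
noncomputable def NMhat :
    SimpleGraph {M : Matrix (Fin 3) (Fin 3) (ZMod 2) // M.IsSymm ∧ M.det ≠ 0} where
  Adj A B := A ≠ B ∧ (A.1 + B.1) 0 0 = 0 ∧ (A.1 + B.1) 1 1 = 0 ∧ (A.1 + B.1) 2 2 = 0
  symm := ⟨fun A B h => ⟨h.1.symm, by rw [add_comm]; exact h.2⟩⟩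
  loopless := ⟨fun A h => h.1 rfl⟩

/-- The disjoint union of `7` copies of the complete graph `K₄`. -/
def sevenK4 : SimpleGraph (Fin 7 × Fin 4) where
  Adj p q := p.1 = q.1 ∧ p.2 ≠ q.2
  symm := ⟨fun p q h => ⟨h.1.symm, h.2.symm⟩⟩
  loopless := ⟨fun p h => h.2 rfl⟩

namespace NMhatAux

lemma zmod2_add_eq_zero (a b : ZMod 2) : a + b = 0 ↔ a = b := by revert a b; decide

abbrev V := {M : Matrix (Fin 3) (Fin 3) (ZMod 2) // M.IsSymm ∧ M.det ≠ 0}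

def D (A : V) : Fin 3 → ZMod 2 := fun i => A.1 i i

lemma D_ne_zero (A : V) : D A ≠ 0 := by
  intro h
  have h0 : A.1 0 0 = 0 := congrFun h 0
  have h1 : A.1 1 1 = 0 := congrFun h 1
  have h2 : A.1 2 2 = 0 := congrFun h 2
  have hs := A.2.1
  have e10 : A.1 1 0 = A.1 0 1 := by
    have := congrFun (congrFun hs 0) 1; simpa [Matrix.transpose_apply] using this
  have e20 : A.1 2 0 = A.1 0 2 := by
    have := congrFun (congrFun hs 0) 2; simpa [Matrix.transpose_apply] using this
  have e21 : A.1 2 1 = A.1 1 2 := by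
    have := congrFun (congrFun hs 1) 2; simpa [Matrix.transpose_apply] using this
  apply A.2.2
  rw [Matrix.det_fin_three, h0, h1, h2, e10, e20, e21]
  ring_nf
  rw [show (2 : ZMod 2) = 0 by decide]
  ring

def Dnz (A : V) : {d : Fin 3 → ZMod 2 // d ≠ 0} := ⟨D A, D_ne_zero A⟩

lemma card7 : Fintype.card {d : Fin 3 → ZMod 2 // d ≠ 0} = 7 := by decide

lemma card4 : ∀ d : {d : Fin 3 → ZMod 2 // d ≠ 0},
    Fintype.card {A : V // Dnz A = d} = 4 := by
  intro d
  have h4 : Fintype.card {A : V // D A = d.1} = 4 := by revert d; decide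
  rw [← h4]
  exact Fintype.card_congr (Equiv.subtypeEquivRight (fun A =>
    ⟨fun h => congrArg Subtype.val h, fun h => Subtype.ext h⟩))

noncomputable def fiberEquiv (d : {d : Fin 3 → ZMod 2 // d ≠ 0}) :
    {A : V // Dnz A = d} ≃ Fin 4 :=
  Fintype.equivFinOfCardEq (card4 d)

noncomputable def e7 : {d : Fin 3 → ZMod 2 // d ≠ 0} ≃ Fin 7 :=
  Fintype.equivFinOfCardEq card7

noncomputable def f : V ≃ Fin 7 × Fin 4 :=
  (Equiv.sigmaFiberEquiv Dnz).symm.trans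
    ((Equiv.sigmaCongrRight fiberEquiv).trans
      ((Equiv.sigmaEquivProd _ (Fin 4)).trans (Equiv.prodCongr e7 (Equiv.refl _))))

lemma f_fst (A : V) : (f A).1 = e7 (Dnz A) := rfl

lemma adj_iff (A B : V) : NMhat.Adj A B ↔ A ≠ B ∧ D A = D B := by
  have key : ∀ i, (A.1 + B.1) i i = 0 ↔ D A i = D B i := fun i => by
    rw [Matrix.add_apply]; exact zmod2_add_eq_zero _ _
  constructor
  · rintro ⟨hne, h0, h1, h2⟩
    refine ⟨hne, funext fun i => ?_⟩
    fin_cases i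
    · exact (key 0).1 h0
    · exact (key 1).1 h1
    · exact (key 2).1 h2
  · rintro ⟨hne, hD⟩
    exact ⟨hne, (key 0).2 (congrFun hD 0), (key 1).2 (congrFun hD 1),
      (key 2).2 (congrFun hD 2)⟩

end NMhatAux

/-- `NM-hat` is isomorphic to the disjoint union of `7` copies of `K₄`. -/
theorem NMhat_iso_sevenK4 : Nonempty (NMhat ≃g sevenK4) := by
  refine ⟨⟨NMhatAux.f, ?_⟩⟩
  intro A B
  show sevenK4.Adj _ _ ↔ NMhat.Adj A B
  rw [NMhatAux.adj_iff]
  unfold sevenK4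
  simp only
  constructor
  · rintro ⟨h1, h2⟩
    have hf1 : NMhatAux.e7 (NMhatAux.Dnz A) = NMhatAux.e7 (NMhatAux.Dnz B) := by
      rw [← NMhatAux.f_fst, ← NMhatAux.f_fst]; exact h1
    have hD : NMhatAux.D A = NMhatAux.D B :=
      congrArg Subtype.val (NMhatAux.e7.injective hf1)
    exact ⟨fun h => h2 (by rw [h]), hD⟩
  · rintro ⟨hne, hD⟩
    have hDnz : NMhatAux.Dnz A = NMhatAux.Dnz B := Subtype.ext hD
    have h1 : (NMhatAux.f A).1 = (NMhatAux.f B).1 := by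
      rw [NMhatAux.f_fst, NMhatAux.f_fst, hDnz]
    exact ⟨h1, fun h2 => hne (NMhatAux.f.injective (Prod.ext h1 h2))⟩
end

section
/- Let F be a finite field with q elements. The number of invertible symmetric 3×3 matrices over F is (q−1)(q⁵−q²). (Equivalently, the orbit O₄ of non-degenerate conics of PG(2,q) has q⁵−q² elements.) -/
open scoped Classical
open Finset

section Aux
set_option linter.unusedSectionVars false
variable {F : Type*} [Field F] [Fintype F]

lemma aux_sum_ite_ne (t : F) (C : ℕ) :
    (∑ x : F, if x = t then (0:ℕ) else C) = (Fintype.card F - 1) * C := by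
  rw [Finset.sum_ite, Finset.sum_const, Finset.sum_const, smul_eq_mul, smul_eq_mul,
    mul_zero, zero_add]
  congr 1
  have : (univ : Finset F).filter (fun x => ¬ x = t) = univ.erase t := by
    ext x; simp [Finset.mem_erase, and_comm]
  rw [this, Finset.card_erase_of_mem (mem_univ _), Finset.card_univ]

lemma aux_sum_solve (α β : F) :
    (∑ x : F, if α * x = β then (0:ℕ) else 1)
      = if α = 0 then (if β = 0 then 0 else Fintype.card F) else Fintype.card F - 1 := by
  by_cases hα : α = 0
  · subst hα
    by_cases hβ : β = 0
    · simp [hβ]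
    · simp [hβ, Ne.symm hβ, Finset.card_univ]
  · have h : ∀ x : F, (α * x = β) ↔ x = α⁻¹ * β := by
      intro x; constructor <;> intro h <;> subst h <;> field_simp
    simp_rw [h, hα, if_false]
    rw [aux_sum_ite_ne, mul_one]

lemma aux_key5 (a b d : F) :
    (∑ e : F, ∑ f : F, ∑ c : F,
      if a*b*c + 2*(d*e*f) - a*f^2 - b*e^2 - c*d^2 = 0 then (0:ℕ) else 1)
    = if a = 0 ∧ b = 0 ∧ d = 0 then 0
      else Fintype.card F ^ 2 * (Fintype.card F - 1) := by
  set q := Fintype.card F with hq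
  have hrw : ∀ e f c : F, (a*b*c + 2*(d*e*f) - a*f^2 - b*e^2 - c*d^2 = 0)
      ↔ ((a*b - d^2) * c = a*f^2 + b*e^2 - 2*(d*e*f)) := by
    intro e f c; constructor <;> intro h <;> linear_combination h
  simp_rw [hrw, aux_sum_solve]
  by_cases hab : a * b - d^2 = 0
  · simp only [hab, if_true, if_pos rfl]
    by_cases ha : a = 0
    · have hd : d = 0 := by
        have : d^2 = 0 := by linear_combination -hab + b * ha
        exact pow_eq_zero_iff (by norm_num) |>.mp this
      by_cases hb : b = 0
      · simp [ha, hb, hd]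
      · simp only [ha, hb, hd, false_and, and_false, if_false]
        have h1 : ∀ e f : F, ((0:F)*f^2 + b*e^2 - 2*((0:F)*e*f) = 0) ↔ e = 0 := by
          intro e f
          constructor
          · intro h
            have : b * e^2 = 0 := by linear_combination h
            rcases mul_eq_zero.mp this with h' | h'
            · exact absurd h' hb
            · exact pow_eq_zero_iff (by norm_num) |>.mp h'
          · rintro rfl; ring
        simp_rw [h1]
        have h2 : ∀ e : F, (∑ _f : F, if e = (0:F) then (0:ℕ) else q)
            = if e = (0:F) then (0:ℕ) else q * q := by
          intro e
          by_cases he : e = 0 <;> simp [he, Finset.card_univ, ← hq]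
        rw [← hq]
        simp_rw [h2, aux_sum_ite_ne]
        ring
    · have h1 : ∀ e f : F, (a*f^2 + b*e^2 - 2*(d*e*f) = 0) ↔ f = a⁻¹ * (d*e) := by
        intro e f
        constructor
        · intro h
          have h2 : (a*f - d*e)^2 = 0 := by linear_combination a * h - e^2 * hab
          have h3 : a * f - d * e = 0 := pow_eq_zero_iff (by norm_num) |>.mp h2
          field_simp
          linear_combination h3
        · rintro rfl
          field_simp
          linear_combination e^2 * hab
      simp_rw [h1, aux_sum_ite_ne]
      simp only [ha, false_and, if_false]
      rw [Finset.sum_const, Finset.card_univ, smul_eq_mul, ← hq]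
      ring
  · simp only [hab, if_false]
    have hne : ¬ (a = 0 ∧ b = 0 ∧ d = 0) := by
      rintro ⟨rfl, rfl, rfl⟩; simp at hab
    simp only [hne, if_false]
    rw [Finset.sum_const, Finset.sum_const]  -- inner sums are constants
    simp [Finset.card_univ, ← hq]
    ring

lemma aux_sum_ite_zero (A B : ℕ) :
    (∑ x : F, if x = (0:F) then A else B) = A + (Fintype.card F - 1) * B := by
  rw [Finset.sum_ite, Finset.sum_const, Finset.sum_const, smul_eq_mul, smul_eq_mul]
  have h1 : (univ : Finset F).filter (fun x => x = (0:F)) = {0} := by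
    ext x; simp
  have h2 : (univ : Finset F).filter (fun x => ¬ x = (0:F)) = univ.erase 0 := by
    ext x; simp [Finset.mem_erase, and_comm]
  rw [h1, h2, Finset.card_singleton, Finset.card_erase_of_mem (mem_univ _),
    Finset.card_univ, one_mul]

lemma aux_sum3 (C : ℕ) :
    (∑ a : F, ∑ b : F, ∑ d : F, if a = 0 ∧ b = 0 ∧ d = 0 then (0:ℕ) else C)
      = (Fintype.card F ^ 3 - 1) * C := by
  set q := Fintype.card F with hq
  have hq1 : 1 ≤ q := Fintype.card_pos
  have step1 : ∀ b : F, (∑ d : F, if b = 0 ∧ d = 0 then (0:ℕ) else C)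
      = if b = 0 then (q-1)*C else q*C := by
    intro b
    by_cases hb : b = 0
    · simp only [hb, true_and, if_true]
      exact aux_sum_ite_ne 0 C
    · simp [hb, Finset.card_univ, ← hq]
  have step2 : ∀ a : F, (∑ b : F, ∑ d : F, if a = 0 ∧ b = 0 ∧ d = 0 then (0:ℕ) else C)
      = if a = 0 then (q^2-1)*C else q^2*C := by
    intro a
    by_cases ha : a = 0
    · simp only [ha, true_and, if_true]
      simp_rw [step1, aux_sum_ite_zero]
      have h2 : 1 ≤ q^2 := Nat.one_le_pow _ _ hq1
      rw [← hq]
      zify [hq1, h2]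
      ring
    · simp [ha, Finset.card_univ, ← hq]
      ring
  simp_rw [step2, aux_sum_ite_zero]
  have h2 : 1 ≤ q^2 := Nat.one_le_pow _ _ hq1
  have h3 : 1 ≤ q^3 := Nat.one_le_pow _ _ hq1
  rw [← hq]
  zify [hq1, h2, h3]
  ring

def auxD (v : F × F × F × F × F × F) : F :=
  v.1 * v.2.1 * v.2.2.2.2.2 + 2 * (v.2.2.1 * v.2.2.2.1 * v.2.2.2.2.1)
    - v.1 * v.2.2.2.2.1 ^ 2 - v.2.1 * v.2.2.2.1 ^ 2 - v.2.2.2.2.2 * v.2.2.1 ^ 2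

def auxM (v : F × F × F × F × F × F) : Matrix (Fin 3) (Fin 3) F :=
  !![v.1, v.2.2.1, v.2.2.2.1;
     v.2.2.1, v.2.1, v.2.2.2.2.1;
     v.2.2.2.1, v.2.2.2.2.1, v.2.2.2.2.2]

lemma auxM_symm (v : F × F × F × F × F × F) : (auxM v).IsSymm := by
  obtain ⟨a, b, d, e, f, c⟩ := v
  unfold Matrix.IsSymm
  ext i j
  fin_cases i <;> fin_cases j <;> rfl

lemma auxM_det (v : F × F × F × F × F × F) : (auxM v).det = auxD v := by
  obtain ⟨a, b, d, e, f, c⟩ := v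
  simp [auxM, auxD, Matrix.det_fin_three]
  ring

lemma aux_det_symm (M : Matrix (Fin 3) (Fin 3) F) (h : M.IsSymm) :
    M.det = auxD (M 0 0, M 1 1, M 0 1, M 0 2, M 1 2, M 2 2) := by
  rw [Matrix.det_fin_three, show M 1 0 = M 0 1 from h.apply 0 1,
    show M 2 0 = M 0 2 from h.apply 0 2, show M 2 1 = M 1 2 from h.apply 1 2]
  simp only [auxD]
  ring

lemma auxM_entries (M : Matrix (Fin 3) (Fin 3) F) (h : M.IsSymm) :
    auxM (M 0 0, M 1 1, M 0 1, M 0 2, M 1 2, M 2 2) = M := by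
  ext i j
  fin_cases i <;> fin_cases j <;>
    simp [auxM, show M 1 0 = M 0 1 from h.apply 0 1,
      show M 2 0 = M 0 2 from h.apply 0 2, show M 2 1 = M 1 2 from h.apply 1 2]

def auxEquiv : {M : Matrix (Fin 3) (Fin 3) F // M.IsSymm ∧ IsUnit M.det} ≃
    {v : F × F × F × F × F × F // ¬ auxD v = 0} where
  toFun x := ⟨(x.1 0 0, x.1 1 1, x.1 0 1, x.1 0 2, x.1 1 2, x.1 2 2), by
    rw [← aux_det_symm x.1 x.2.1]
    exact isUnit_iff_ne_zero.mp x.2.2⟩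
  invFun v := ⟨auxM v.1, auxM_symm v.1, by
    rw [isUnit_iff_ne_zero, auxM_det]; exact v.2⟩
  left_inv x := Subtype.ext (auxM_entries x.1 x.2.1)
  right_inv v := by
    obtain ⟨⟨a, b, d, e, f, c⟩, hv⟩ := v
    apply Subtype.ext
    simp [auxM]

end Aux

/-- Over a finite field `F` with `q` elements, the number of invertible symmetric `3 × 3`
matrices is `(q−1)(q⁵−q²)`: the orbit `O₄` of non-degenerate conics of `PG(2,q)` has
`q⁵−q²` elements. -/
theorem card_invertible_symm (F : Type*) [Field F] [Fintype F] :
    Fintype.card {M : Matrix (Fin 3) (Fin 3) F // M.IsSymm ∧ IsUnit M.det} =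
      (Fintype.card F - 1) * (Fintype.card F ^ 5 - Fintype.card F ^ 2) := by
  classical
  set q := Fintype.card F with hq
  have hq1 : 1 ≤ q := Fintype.card_pos
  rw [Fintype.card_congr (auxEquiv (F := F)), Fintype.card_subtype, Finset.card_filter]
  have : ∀ v : F × F × F × F × F × F,
      (if ¬ auxD v = 0 then (1:ℕ) else 0) = (if auxD v = 0 then 0 else 1) := by
    intro v; by_cases h : auxD v = 0 <;> simp [h]
  simp_rw [this, Fintype.sum_prod_type]
  delta auxD
  dsimp only
  simp_rw [aux_key5, aux_sum3]
  have h2 : q^2 ≤ q^5 := Nat.pow_le_pow_right hq1 (by norm_num)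
  have h3 : 1 ≤ q^3 := Nat.one_le_pow _ _ hq1
  rw [← hq]
  zify [hq1, h2, h3]
  ring
end
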